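/- The three-symbol upgrading capacity gain Δ[λ₁; λ₂,π₂; λ₃] is non-increasing in λ₁ and non-decreasing in λ₃: for λ₁' ≤ λ₁ < λ₂ < λ₃ ≤ λ₃' (all finite, λ₁' > 0), Δ[λ₁;λ₂,π₂;λ₃] ≤ Δ[λ₁';λ₂,π₂;λ₃']. -/

import Mathlib

/-- Capacity gain `Δ[lam₁; lam₂,pi₂; lam₃]` of the three-symbol upgrading merge. -/
noncomputable def deltaUp (lam₁ lam₂ pi₂ lam₃ : ℝ) : ℝ :=
  pi₂ / ((lam₂ + 1) * (lam₁ - lam₃)) *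
    ((lam₃ - lam₂) * (lam₁ * Real.logb 2 (1 + 1 / lam₁) + Real.logb 2 (1 + lam₁)) +
     (lam₂ - lam₁) * (lam₃ * Real.logb 2 (1 + 1 / lam₃) + Real.logb 2 (1 + lam₃)) +
     (lam₁ - lam₃) * (lam₂ * Real.logb 2 (1 + 1 / lam₂) + Real.logb 2 (1 + lam₂)))

noncomputable def Faux (x : ℝ) : ℝ := (x + 1) * Real.log (x + 1) - x * Real.log x

lemma hasDerivAt_Faux {x : ℝ} (hx : 0 < x) :
    HasDerivAt Faux (Real.log (x + 1) - Real.log x) x := by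
  have h1 : HasDerivAt (fun y : ℝ => (y + 1) * Real.log (y + 1))
      ((Real.log (x + 1) + 1) * 1) x := by
    exact (Real.hasDerivAt_mul_log (by linarith)).comp x ((hasDerivAt_id x).add_const 1)
  have h2 : HasDerivAt (fun y : ℝ => y * Real.log y) (Real.log x + 1) x :=
    Real.hasDerivAt_mul_log (ne_of_gt hx)
  have h3 := h1.sub h2
  have e : Faux = ((fun y : ℝ => (y + 1) * Real.log (y + 1)) - fun y : ℝ => y * Real.log y) := rfl
  rw [e]
  have hd : (Real.log (x + 1) + 1) * 1 - (Real.log x + 1) = Real.log (x + 1) - Real.log x := by ring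
  rw [hd] at h3
  exact h3

lemma Faux_concave : ConcaveOn ℝ (Set.Ioi 0) Faux := by
  have hint : interior (Set.Ioi (0 : ℝ)) = Set.Ioi 0 := interior_Ioi
  apply AntitoneOn.concaveOn_of_deriv (convex_Ioi 0)
  · exact fun x hx => (hasDerivAt_Faux hx).continuousAt.continuousWithinAt
  · rw [hint]
    exact fun x hx => (hasDerivAt_Faux hx).differentiableAt.differentiableWithinAt
  · rw [hint]
    intro x hx y hy hxy
    rw [(hasDerivAt_Faux hx).deriv, (hasDerivAt_Faux hy).deriv]
    have hx0 : (0:ℝ) < x := hx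
    have hy0 : (0:ℝ) < y := hy
    have key : Real.log (y + 1) - Real.log (x + 1) ≤ Real.log y - Real.log x := by
      rw [← Real.log_div (by linarith) (by linarith), ← Real.log_div (ne_of_gt hy0) (ne_of_gt hx0)]
      apply Real.log_le_log (by positivity)
      rw [div_le_div_iff₀ (by linarith) hx0]
      nlinarith
    linarith

/-- Chord inequality for a concave function. -/
lemma chord_le {a x b : ℝ} (ha : 0 < a) (hax : a ≤ x) (hxb : x ≤ b) (hab : a < b) :
    (b - x) * Faux a + (x - a) * Faux b ≤ (b - a) * Faux x := by
  have hba : (0:ℝ) < b - a := by linarith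
  have h := Faux_concave.2 (Set.mem_Ioi.2 ha) (Set.mem_Ioi.2 (by linarith : (0:ℝ) < b))
    (show (0:ℝ) ≤ (b - x) / (b - a) from div_nonneg (by linarith) hba.le)
    (show (0:ℝ) ≤ (x - a) / (b - a) from div_nonneg (by linarith) hba.le) (by field_simp; ring)
  have hxeq : ((b - x) / (b - a)) • a + ((x - a) / (b - a)) • b = x := by
    simp only [smul_eq_mul]
    rw [div_mul_eq_mul_div, div_mul_eq_mul_div, ← add_div, div_eq_iff hba.ne']
    ring
  rw [hxeq] at h
  simp only [smul_eq_mul] at h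
  have := mul_le_mul_of_nonneg_left h hba.le
  calc (b - x) * Faux a + (x - a) * Faux b
      = (b - a) * ((b - x) / (b - a) * Faux a + (x - a) / (b - a) * Faux b) := by
        field_simp
    _ ≤ (b - a) * Faux x := this

lemma f_eq_Faux {x : ℝ} (hx : 0 < x) :
    x * Real.logb 2 (1 + 1 / x) + Real.logb 2 (1 + x) = Faux x / Real.log 2 := by
  have h1 : (1 : ℝ) + 1 / x = (x + 1) / x := by field_simp
  rw [Real.logb, Real.logb, h1, Real.log_div (by linarith) (ne_of_gt hx)]
  unfold Faux
  have : (1 : ℝ) + x = x + 1 := by ring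
  rw [this]
  field_simp
  ring

/-- `Δ[lam₁; lam₂,pi₂; lam₃]` is non-increasing in `lam₁` and
non-decreasing in `lam₃`. -/
theorem deltaUp_monotone (lam₁' lam₁ lam₂ pi₂ lam₃ lam₃' : ℝ)
    (h₀ : 0 < lam₁') (h₁ : lam₁' ≤ lam₁) (h₂ : lam₁ < lam₂) (h₃ : lam₂ < lam₃)
    (h₄ : lam₃ ≤ lam₃') (hpi : 0 < pi₂) :
    deltaUp lam₁ lam₂ pi₂ lam₃ ≤ deltaUp lam₁' lam₂ pi₂ lam₃' := by
  have h10 : (0:ℝ) < lam₁ := lt_of_lt_of_le h₀ h₁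
  have h20 : (0:ℝ) < lam₂ := h10.trans h₂
  have h30 : (0:ℝ) < lam₃ := h20.trans h₃
  have h30' : (0:ℝ) < lam₃' := h30.trans_le h₄
  have hD : (0:ℝ) < Real.log 2 := Real.log_pos (by norm_num)
  -- chord inequalities: lam₁ and lam₃ lie in [lam₁', lam₃']
  have hab' : lam₁' < lam₃' := by linarith
  have c1 := chord_le h₀ h₁ (by linarith : lam₁ ≤ lam₃') hab'
  have c2 := chord_le h₀ (by linarith : lam₁' ≤ lam₃) h₄ hab'
  -- key inequality between weighted chords
  set Fa := Faux lam₁ with hFa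
  set Fb := Faux lam₃ with hFb
  set Fa' := Faux lam₁' with hFa'
  set Fb' := Faux lam₃' with hFb'
  set F2 := Faux lam₂ with hF2
  have key : ((lam₃' - lam₂) * Fa' + (lam₂ - lam₁') * Fb') * (lam₃ - lam₁)
      ≤ ((lam₃ - lam₂) * Fa + (lam₂ - lam₁) * Fb) * (lam₃' - lam₁') := by
    nlinarith [mul_le_mul_of_nonneg_left c1 (by linarith : (0:ℝ) ≤ lam₃ - lam₂),
      mul_le_mul_of_nonneg_left c2 (by linarith : (0:ℝ) ≤ lam₂ - lam₁)]
  -- rewrite both sides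
  have hrw : ∀ a b : ℝ, 0 < a → a < lam₂ → lam₂ < b →
      deltaUp a lam₂ pi₂ b = pi₂ / ((lam₂ + 1) * Real.log 2) *
        (Faux lam₂ - ((b - lam₂) * Faux a + (lam₂ - a) * Faux b) / (b - a)) := by
    intro a b ha hal hlb
    unfold deltaUp
    rw [f_eq_Faux ha, f_eq_Faux (by linarith : (0:ℝ) < b), f_eq_Faux h20]
    have hab : a - b ≠ 0 := by intro h; nlinarith
    have hba : b - a ≠ 0 := by intro h; nlinarith
    field_simp
    ring
  rw [hrw lam₁ lam₃ h10 h₂ h₃, hrw lam₁' lam₃' h₀ (lt_of_le_of_lt h₁ h₂) (lt_of_lt_of_le h₃ h₄)]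
  have hP : (0:ℝ) < pi₂ / ((lam₂ + 1) * Real.log 2) := by positivity
  apply mul_le_mul_of_nonneg_left _ hP.le
  apply sub_le_sub_left
  rw [div_le_div_iff₀ (by linarith) (by linarith)]
  exact key
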